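/- For A-bounded operators T, S and q ∈ ℂ with 0 < |q| ≤ 1, one has |c_{A,q}(T) − c_{A,q}(S)| ≤ ω_{A,q}(T − S); consequently, if ‖Tₙ − T‖_A → 0 then c_{A,q}(Tₙ) → c_{A,q}(T). -/

import Mathlib

noncomputable def innA {H : Type*} [NormedAddCommGroup H] [InnerProductSpace ℂ H]
    (A : H →L[ℂ] H) (x y : H) : ℂ := inner ℂ (A x) y

noncomputable def snA {H : Type*} [NormedAddCommGroup H] [InnerProductSpace ℂ H]
    (A : H →L[ℂ] H) (x : H) : ℝ := Real.sqrt (innA A x x).re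

noncomputable def opNormA {H : Type*} [NormedAddCommGroup H] [InnerProductSpace ℂ H]
    (A T : H →L[ℂ] H) : ℝ := sSup {r : ℝ | ∃ x : H, snA A x = 1 ∧ r = snA A (T x)}

def ABounded {H : Type*} [NormedAddCommGroup H] [InnerProductSpace ℂ H]
    (A T : H →L[ℂ] H) : Prop := ∃ c > 0, ∀ x : H, snA A (T x) ≤ c * snA A x

noncomputable def wAq {H : Type*} [NormedAddCommGroup H] [InnerProductSpace ℂ H]
    (A T : H →L[ℂ] H) (q : ℂ) : ℝ :=
  sSup {r : ℝ | ∃ x y : H, snA A x = 1 ∧ snA A y = 1 ∧ innA A x y = q ∧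
    r = ‖innA A (T x) y‖}

noncomputable def cAq {H : Type*} [NormedAddCommGroup H] [InnerProductSpace ℂ H]
    (A T : H →L[ℂ] H) (q : ℂ) : ℝ :=
  sInf {r : ℝ | ∃ x y : H, snA A x = 1 ∧ snA A y = 1 ∧ innA A x y = q ∧
    r = ‖innA A (T x) y‖}

noncomputable def wA {H : Type*} [NormedAddCommGroup H] [InnerProductSpace ℂ H]
    (A T : H →L[ℂ] H) : ℝ :=
  sSup {r : ℝ | ∃ x : H, snA A x = 1 ∧ r = ‖innA A (T x) x‖}

noncomputable def cA {H : Type*} [NormedAddCommGroup H] [InnerProductSpace ℂ H]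
    (A T : H →L[ℂ] H) : ℝ :=
  sInf {r : ℝ | ∃ x : H, snA A x = 1 ∧ r = ‖innA A (T x) x‖}

def WAq {H : Type*} [NormedAddCommGroup H] [InnerProductSpace ℂ H]
    (A T : H →L[ℂ] H) (q : ℂ) : Set ℂ :=
  {r : ℂ | ∃ x y : H, snA A x = 1 ∧ snA A y = 1 ∧ innA A x y = q ∧ r = innA A (T x) y}

section Aux

variable {H : Type*} [NormedAddCommGroup H] [InnerProductSpace ℂ H] [CompleteSpace H]
  (A : H →L[ℂ] H)

/-- The semi-inner-product core associated to a positive operator. -/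
noncomputable def coreA (hA : A.IsPositive) : PreInnerProductSpace.Core ℂ H where
  inner := innA A
  conj_inner_symm := fun x y => by
    have hsym := hA.1
    simp only [innA]
    rw [inner_conj_symm]
    exact (hsym x y).symm
  re_inner_nonneg := fun x => hA.2 x
  add_left := fun x y z => by simp [innA, map_add, inner_add_left]
  smul_left := fun x y r => by simp [innA, map_smul, inner_smul_left, mul_comm]

omit [CompleteSpace H]

lemma snA_nonneg (x : H) : 0 ≤ snA A x := Real.sqrt_nonneg _

lemma innA_self_re_nonneg [CompleteSpace H] (hA : A.IsPositive) (x : H) :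
    0 ≤ (innA A x x).re := hA.2 x

lemma snA_sq [CompleteSpace H] (hA : A.IsPositive) (x : H) :
    snA A x * snA A x = (innA A x x).re :=
  Real.mul_self_sqrt (innA_self_re_nonneg A hA x)

lemma innA_conj_symm [CompleteSpace H] (hA : A.IsPositive) (x y : H) :
    (starRingEnd ℂ) (innA A y x) = innA A x y :=
  (coreA A hA).conj_inner_symm x y

/-- Cauchy–Schwarz for the A-semi-inner-product. -/
lemma csA [CompleteSpace H] (hA : A.IsPositive) (x y : H) :
    ‖innA A x y‖ ≤ snA A x * snA A y := by
  have h := @InnerProductSpace.Core.inner_mul_inner_self_le ℂ H _ _ _ (coreA A hA) x y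
  have hsym : ‖innA A y x‖ = ‖innA A x y‖ := by
    rw [← innA_conj_symm A hA x y]; simp
  have h' : ‖innA A x y‖ * ‖innA A x y‖ ≤ (innA A x x).re * (innA A y y).re := by
    calc ‖innA A x y‖ * ‖innA A x y‖ = ‖innA A x y‖ * ‖innA A y x‖ := by rw [hsym]
    _ ≤ (innA A x x).re * (innA A y y).re := h
  have habs : ‖innA A x y‖ = ‖innA A x y‖ := rfl
  rw [habs]
  have h2 : ‖innA A x y‖ ≤ Real.sqrt ((innA A x x).re * (innA A y y).re) := by
    rw [show ‖innA A x y‖ = Real.sqrt (‖innA A x y‖ * ‖innA A x y‖) from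
      (Real.sqrt_mul_self (norm_nonneg _)).symm]
    exact Real.sqrt_le_sqrt h'
  rw [Real.sqrt_mul (innA_self_re_nonneg A hA x)] at h2
  exact h2

lemma innA_add_left (x y z : H) : innA A (x + y) z = innA A x z + innA A y z := by
  simp [innA, map_add, inner_add_left]

lemma innA_sub_left (x y z : H) : innA A (x - y) z = innA A x z - innA A y z := by
  simp [innA, map_sub, inner_sub_left]

lemma innA_neg_left (x z : H) : innA A (-x) z = - innA A x z := by
  simp [innA, map_neg, inner_neg_left]

lemma snA_neg (x : H) : snA A (-x) = snA A x := by
  simp [snA, innA, map_neg, inner_neg_neg]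

lemma snA_smul (c : ℂ) (x : H) : snA A (c • x) = ‖c‖ * snA A x := by
  have h1 : innA A (c • x) (c • x) = (starRingEnd ℂ) c * (c * innA A x x) := by
    simp [innA, map_smul, inner_smul_left, inner_smul_right]
    ring
  rw [snA, h1]
  have h2 : ((starRingEnd ℂ) c * (c * innA A x x)).re
      = (‖c‖)^2 * (innA A x x).re := by
    rw [← mul_assoc, Complex.conj_mul', ← Complex.ofReal_pow, Complex.re_ofReal_mul]
  rw [h2, Real.sqrt_mul (by positivity), snA, Real.sqrt_sq (by positivity)]

lemma snA_add_le [CompleteSpace H] (hA : A.IsPositive) (x y : H) :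
    snA A (x + y) ≤ snA A x + snA A y := by
  have hxy := csA A hA x y
  have hyx := csA A hA y x
  have hsum : (innA A (x + y) (x + y)).re
      = (innA A x x).re + (innA A x y).re + (innA A y x).re + (innA A y y).re := by
    have h : innA A (x + y) (x + y)
        = innA A x x + innA A x y + innA A y x + innA A y y := by
      simp [innA, map_add, inner_add_left, inner_add_right]
      ring
    rw [h]; simp
  have h1 : (innA A x y).re ≤ snA A x * snA A y :=
    le_trans (Complex.re_le_norm _) hxy
  have h2 : (innA A y x).re ≤ snA A y * snA A x :=
    le_trans (Complex.re_le_norm _) hyx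
  have hle : (innA A (x + y) (x + y)).re ≤ (snA A x + snA A y)^2 := by
    rw [hsum]
    nlinarith [snA_sq A hA x, snA_sq A hA y]
  calc snA A (x + y) = Real.sqrt (innA A (x + y) (x + y)).re := rfl
    _ ≤ Real.sqrt ((snA A x + snA A y)^2) := Real.sqrt_le_sqrt hle
    _ = snA A x + snA A y := Real.sqrt_sq (add_nonneg (snA_nonneg A x) (snA_nonneg A y))

lemma snA_sub_le [CompleteSpace H] (hA : A.IsPositive) (x y : H) :
    snA A (x - y) ≤ snA A x + snA A y := by
  rw [sub_eq_add_neg]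
  calc snA A (x + -y) ≤ snA A x + snA A (-y) := snA_add_le A hA x (-y)
    _ = snA A x + snA A y := by rw [snA_neg]

end Aux

theorem stmt17 {H : Type*} [NormedAddCommGroup H] [InnerProductSpace ℂ H] [CompleteSpace H]
    (A : H →L[ℂ] H) (hA : A.IsPositive) (hA0 : A ≠ 0)
    (q : ℂ) (hq0 : 0 < ‖q‖) (hq1 : ‖q‖ ≤ 1) :
    (∀ T S : H →L[ℂ] H, ABounded A T → ABounded A S →
      |cAq A T q - cAq A S q| ≤ wAq A (T - S) q) ∧
    (∀ (Tn : ℕ → H →L[ℂ] H) (T : H →L[ℂ] H), (∀ n, ABounded A (Tn n)) → ABounded A T →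
      Filter.Tendsto (fun n => opNormA A (Tn n - T)) Filter.atTop (nhds 0) →
      Filter.Tendsto (fun n => cAq A (Tn n) q) Filter.atTop (nhds (cAq A T q))) := by
  -- notation for the defining sets
  set P : H → H → Prop := fun x y => snA A x = 1 ∧ snA A y = 1 ∧ innA A x y = q with hP
  have hsetdef : ∀ R : H →L[ℂ] H,
      {r : ℝ | ∃ x y : H, snA A x = 1 ∧ snA A y = 1 ∧ innA A x y = q ∧
        r = ‖innA A (R x) y‖}
      = {r : ℝ | ∃ x y : H, P x y ∧ r = ‖innA A (R x) y‖} := by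
    intro R; ext r
    simp only [Set.mem_setOf_eq, hP]
    constructor
    · rintro ⟨x, y, h1, h2, h3, h4⟩; exact ⟨x, y, ⟨h1, h2, h3⟩, h4⟩
    · rintro ⟨x, y, ⟨h1, h2, h3⟩, h4⟩; exact ⟨x, y, h1, h2, h3, h4⟩
  -- lower bound 0 for all such sets
  have hbdd0 : ∀ R : H →L[ℂ] H, ∀ r ∈ {r : ℝ | ∃ x y : H, P x y ∧
      r = ‖innA A (R x) y‖}, (0:ℝ) ≤ r := by
    rintro R r ⟨x, y, _, rfl⟩; exact norm_nonneg _
  -- bddAbove of the set for an A-bounded operator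
  have hbddAbove : ∀ R : H →L[ℂ] H, ABounded A R →
      BddAbove {r : ℝ | ∃ x y : H, P x y ∧ r = ‖innA A (R x) y‖} := by
    rintro R ⟨c, hc, hR⟩
    refine ⟨c, ?_⟩
    rintro r ⟨x, y, ⟨hx, hy, -⟩, rfl⟩
    calc ‖innA A (R x) y‖ ≤ snA A (R x) * snA A y := csA A hA _ _
      _ ≤ (c * snA A x) * snA A y := by
          exact mul_le_mul_of_nonneg_right (hR x) (snA_nonneg A y)
      _ = c := by rw [hx, hy]; ring
  -- sub of A-bounded is A-bounded
  have hABsub : ∀ T S : H →L[ℂ] H, ABounded A T → ABounded A S → ABounded A (T - S) := by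
    rintro T S ⟨cT, hcT, hT⟩ ⟨cS, hcS, hS⟩
    refine ⟨cT + cS, by positivity, fun x => ?_⟩
    calc snA A ((T - S) x) = snA A (T x - S x) := by
          rw [ContinuousLinearMap.sub_apply]
      _ ≤ snA A (T x) + snA A (S x) := snA_sub_le A hA _ _
      _ ≤ cT * snA A x + cS * snA A x := add_le_add (hT x) (hS x)
      _ = (cT + cS) * snA A x := by ring
  -- the key one-sided inequality
  have hkey : ∀ T S : H →L[ℂ] H, ABounded A T → ABounded A S →
      (∃ x y : H, P x y) → cAq A T q ≤ cAq A S q + wAq A (T - S) q := by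
    intro T S hT hS hne
    rw [← sub_le_iff_le_add]
    unfold cAq wAq
    rw [hsetdef, hsetdef, hsetdef]
    apply le_csInf
    · obtain ⟨x, y, hxy⟩ := hne
      exact ⟨_, x, y, hxy, rfl⟩
    rintro r ⟨x, y, hxy, rfl⟩
    obtain ⟨hx, hy, hq'⟩ := hxy
    have h1 : sInf {r : ℝ | ∃ x y : H, P x y ∧ r = ‖innA A (T x) y‖}
        ≤ ‖innA A (T x) y‖ :=
      csInf_le ⟨0, fun r hr => hbdd0 T r hr⟩ ⟨x, y, ⟨hx, hy, hq'⟩, rfl⟩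
    have h3 : ‖innA A ((T - S) x) y‖
        ≤ sSup {r : ℝ | ∃ x y : H, P x y ∧ r = ‖innA A ((T - S) x) y‖} :=
      le_csSup (hbddAbove _ (hABsub T S hT hS)) ⟨x, y, ⟨hx, hy, hq'⟩, rfl⟩
    have h2 : ‖innA A (T x) y‖
        ≤ ‖innA A (S x) y‖ + ‖innA A ((T - S) x) y‖ := by
      have heq : innA A (T x) y = innA A (S x) y + innA A ((T - S) x) y := by
        rw [ContinuousLinearMap.sub_apply, innA_sub_left]; ring
      rw [heq]
      exact norm_add_le _ _
    linarith
  -- symmetry of w under swapping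
  have hwsymm : ∀ T S : H →L[ℂ] H, wAq A (S - T) q = wAq A (T - S) q := by
    intro T S
    unfold wAq
    rw [hsetdef, hsetdef]
    congr 1
    ext r
    simp only [Set.mem_setOf_eq]
    have habs : ∀ x y : H, ‖innA A ((S - T) x) y‖
        = ‖innA A ((T - S) x) y‖ := by
      intro x y
      have : (S - T) x = -((T - S) x) := by
        simp [ContinuousLinearMap.sub_apply]
      rw [this, innA_neg_left, norm_neg]
    constructor
    · rintro ⟨x, y, hxy, rfl⟩; exact ⟨x, y, hxy, habs x y⟩
    · rintro ⟨x, y, hxy, rfl⟩; exact ⟨x, y, hxy, (habs x y).symm⟩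
  -- Part 1
  have part1 : ∀ T S : H →L[ℂ] H, ABounded A T → ABounded A S →
      |cAq A T q - cAq A S q| ≤ wAq A (T - S) q := by
    intro T S hT hS
    by_cases hne : ∃ x y : H, P x y
    · rw [abs_sub_le_iff]
      constructor
      · have := hkey T S hT hS hne; linarith
      · have := hkey S T hS hT hne
        rw [hwsymm T S] at this
        linarith
    · have hempty : ∀ R : H →L[ℂ] H,
          {r : ℝ | ∃ x y : H, P x y ∧ r = ‖innA A (R x) y‖} = ∅ := by
        intro R
        ext r
        simp only [Set.mem_setOf_eq, Set.mem_empty_iff_false, iff_false]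
        rintro ⟨x, y, hxy, -⟩
        exact hne ⟨x, y, hxy⟩
      unfold cAq wAq
      rw [hsetdef, hsetdef, hsetdef, hempty, hempty, hempty,
        Real.sInf_empty, Real.sSup_empty]
      simp
  refine ⟨part1, ?_⟩
  -- existence of an A-unit vector
  have hunit : ∃ x : H, snA A x = 1 := by
    have hz : ∃ z : H, innA A z z ≠ 0 := by
      by_contra h
      push_neg at h
      apply hA0
      have h0 : (A : H →ₗ[ℂ] H) = 0 := (inner_map_self_eq_zero (A : H →ₗ[ℂ] H)).mp h
      ext v
      have := LinearMap.ext_iff.mp h0 v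
      simpa using this
    obtain ⟨z, hz⟩ := hz
    have him : (innA A z z).im = 0 := by
      have := innA_conj_symm A hA z z
      have h2 := Complex.conj_eq_iff_im.mp this
      exact h2
    have hre : 0 < (innA A z z).re := by
      rcases lt_or_eq_of_le (innA_self_re_nonneg A hA z) with h | h
      · exact h
      · exfalso; apply hz; exact Complex.ext h.symm him
    have hsnz : 0 < snA A z := Real.sqrt_pos.mpr hre
    refine ⟨((snA A z : ℝ) : ℂ)⁻¹ • z, ?_⟩
    rw [snA_smul, norm_inv, Complex.norm_real, Real.norm_eq_abs, abs_of_pos hsnz,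
      inv_mul_cancel₀ (ne_of_gt hsnz)]
  -- w ≤ operator A-seminorm
  have hwle : ∀ R : H →L[ℂ] H, ABounded A R → wAq A R q ≤ opNormA A R := by
    rintro R ⟨cR, hcR, hR⟩
    obtain ⟨x0, hx0⟩ := hunit
    have hNbdd : BddAbove {r : ℝ | ∃ x : H, snA A x = 1 ∧ r = snA A (R x)} := by
      refine ⟨cR, ?_⟩
      rintro r ⟨x, hx, rfl⟩
      calc snA A (R x) ≤ cR * snA A x := hR x
        _ = cR := by rw [hx, mul_one]
    have hN0 : 0 ≤ opNormA A R :=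
      le_trans (snA_nonneg A (R x0)) (le_csSup hNbdd ⟨x0, hx0, rfl⟩)
    apply Real.sSup_le _ hN0
    rintro r ⟨x, y, hx, hy, hq', rfl⟩
    calc ‖innA A (R x) y‖ ≤ snA A (R x) * snA A y := csA A hA _ _
      _ = snA A (R x) := by rw [hy, mul_one]
      _ ≤ opNormA A R := le_csSup hNbdd ⟨x, hx, rfl⟩
  intro Tn T hTn hT htend
  have key : ∀ n, |cAq A (Tn n) q - cAq A T q| ≤ opNormA A (Tn n - T) := fun n =>
    le_trans (part1 (Tn n) T (hTn n) hT) (hwle _ (hABsub (Tn n) T (hTn n) hT))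
  rw [tendsto_iff_dist_tendsto_zero]
  simp only [Real.dist_eq]
  exact squeeze_zero (fun n => abs_nonneg _) key htend
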